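/- Suppose λ = (λ_1,…,λ_n) ∈ Γ_k with k ≥ 1 and λ_1 < 0. Then σ_m(λ|1) ≥ σ_m(λ) for every m = 0, 1, …, k. Moreover, for every 0 ≤ l < k, ∂[σ_k(λ)/σ_l(λ)]/∂λ_1 ≥ (n/k)·((k−l)/(n−l))·(1/(n−k+1))·Σ_{i=1}^n ∂[σ_k(λ)/σ_l(λ)]/∂λ_i. -/

import Mathlib

open Finset Set

noncomputable section

/-- `sigmaV m lam`: the m-th elementary symmetric function σ_m(λ) (σ_0 = 1). -/
def sigmaV {n : ℕ} (m : ℕ) (lam : Fin n → ℝ) : ℝ :=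
  ∑ s ∈ Finset.powersetCard m Finset.univ, ∏ i ∈ s, lam i

/-- σ_m(λ|i): σ_m of the vector λ with the i-th entry set to zero. -/
def sigmaVd {n : ℕ} (m : ℕ) (i : Fin n) (lam : Fin n → ℝ) : ℝ :=
  sigmaV m (Function.update lam i 0)

/-- The Gårding cone Γ_k : σ_m(λ) > 0 for all 1 ≤ m ≤ k. -/
def GammaV {n : ℕ} (k : ℕ) (lam : Fin n → ℝ) : Prop :=
  ∀ m, 1 ≤ m → m ≤ k → 0 < sigmaV m lam

/-- σ_m of a matrix: the sum of its m×m principal minors (equivalently, the m-th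
elementary symmetric function σ_m(λ(A)) of its eigenvalues). -/
def sigmaM {n : ℕ} (m : ℕ) (A : Fin n → Fin n → ℝ) : ℝ :=
  ∑ s ∈ Finset.powersetCard m Finset.univ,
    Matrix.det ((Matrix.of A).submatrix (fun i : ↥s => i.1) (fun i : ↥s => i.1))

/-- λ(A) ∈ Γ_k, expressed via principal minors: σ_m(A) > 0 for all 1 ≤ m ≤ k. -/
def GammaM {n : ℕ} (k : ℕ) (A : Fin n → Fin n → ℝ) : Prop :=
  ∀ m, 1 ≤ m → m ≤ k → 0 < sigmaM m A

/-- Partial derivative ∂u/∂x_i. -/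
def pd {n : ℕ} (i : Fin n) (u : (Fin n → ℝ) → ℝ) : (Fin n → ℝ) → ℝ :=
  fun x => fderiv ℝ u x (Pi.single i 1)

/-- The gradient Du. -/
def gradV {n : ℕ} (u : (Fin n → ℝ) → ℝ) (x : Fin n → ℝ) : Fin n → ℝ :=
  fun i => pd i u x

/-- The Hessian D²u. -/
def hessM {n : ℕ} (u : (Fin n → ℝ) → ℝ) (x : Fin n → ℝ) : Fin n → Fin n → ℝ :=
  fun i j => pd j (pd i u) x

/-- Euclidean inner product. -/
def dotV {n : ℕ} (a b : Fin n → ℝ) : ℝ := ∑ i, a i * b i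

/-- Euclidean norm. -/
def normV {n : ℕ} (a : Fin n → ℝ) : ℝ := Real.sqrt (dotV a a)

/-- Frobenius norm of a matrix (used for |D²u|). -/
def normM {n : ℕ} (A : Fin n → Fin n → ℝ) : ℝ := Real.sqrt (∑ i, ∑ j, (A i j)^2)

/-- `ν` is the outer unit normal to the convex domain Ω at the boundary point x:
the unit vector with ⟨y − x, ν⟩ ≤ 0 for all y ∈ closure Ω. -/
def IsOuterNormalAt {n : ℕ} (Ω : Set (Fin n → ℝ)) (x ν : Fin n → ℝ) : Prop :=
  normV ν = 1 ∧ ∀ y ∈ closure Ω, dotV (y - x) ν ≤ 0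

/-- Ω is a domain of boundary regularity Cᵐ: it is the sublevel set of a Cᵐ defining
function whose gradient does not vanish on the boundary. -/
def BoundaryRegular {n : ℕ} (Ω : Set (Fin n → ℝ)) (m : WithTop ℕ∞) : Prop :=
  ∃ ρ : (Fin n → ℝ) → ℝ, ContDiff ℝ m ρ ∧ Ω = {x | ρ x < 0} ∧
    frontier Ω = {x | ρ x = 0} ∧ ∀ x ∈ frontier Ω, gradV ρ x ≠ 0

/-- Euclidean distance d(x) = dist(x, ∂Ω). -/
def distBd {n : ℕ} (Ω : Set (Fin n → ℝ)) (x : Fin n → ℝ) : ℝ :=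
  sInf ((fun y => normV (x - y)) '' frontier Ω)

/-- The collar Ω_μ = {x ∈ Ω : dist(x, ∂Ω) < μ}. -/
def collar {n : ℕ} (Ω : Set (Fin n → ℝ)) (μ : ℝ) : Set (Fin n → ℝ) :=
  {x ∈ Ω | distBd Ω x < μ}

/-- The quadratic form A(v,v) = Σ_{ij} A_{ij} v_i v_j. -/
def quadF {n : ℕ} (A : Fin n → Fin n → ℝ) (v : Fin n → ℝ) : ℝ :=
  ∑ i, ∑ j, A i j * v i * v j

/-- Time derivative u_t(x,t). -/
def ut {n : ℕ} (u : ℝ → (Fin n → ℝ) → ℝ) (x : Fin n → ℝ) (t : ℝ) : ℝ :=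
  deriv (fun s => u s x) t

/-- ∂[σ_k(λ)/σ_l(λ)]/∂λ_i, via the explicit formula
(σ_{k−1}(λ|i)σ_l(λ) − σ_k(λ)σ_{l−1}(λ|i))/σ_l(λ)², with σ_{−1} := 0. -/
def dQuotV {n : ℕ} (k l : ℕ) (i : Fin n) (lam : Fin n → ℝ) : ℝ :=
  (sigmaVd (k-1) i lam * sigmaV l lam
    - sigmaV k lam * (if l = 0 then 0 else sigmaVd (l-1) i lam)) / (sigmaV l lam)^2

/-- σ_m(A|i): σ_m of the matrix A with the i-th row and column deleted, i.e. the sum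
of the m×m principal minors avoiding index i. -/
def sigmaMd {n : ℕ} (m : ℕ) (i : Fin n) (A : Fin n → Fin n → ℝ) : ℝ :=
  ∑ s ∈ (Finset.powersetCard m Finset.univ).filter (fun s => i ∉ s),
    Matrix.det ((Matrix.of A).submatrix (fun j : ↥s => j.1) (fun j : ↥s => j.1))

/-- ∂[σ_k(A)/σ_l(A)]/∂a_{ii}, via ∂σ_m(A)/∂a_{ii} = σ_{m−1}(A|i) (σ_{−1} := 0):
(σ_{k−1}(A|i)σ_l(A) − σ_k(A)σ_{l−1}(A|i))/σ_l(A)². -/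
def dQuotM {n : ℕ} (k l : ℕ) (i : Fin n) (A : Fin n → Fin n → ℝ) : ℝ :=
  (sigmaMd (k-1) i A * sigmaM l A
    - sigmaM k A * (if l = 0 then 0 else sigmaMd (l-1) i A)) / (sigmaM l A)^2

/-- F^{ij}: the derivative of B ↦ log(σ_k(B)/σ_l(B)) at A in the matrix direction
E_{ij} (the derivative of log(σ_k/σ_l) with respect to the (i,j) entry). -/
def Fcoef {n : ℕ} (k l : ℕ) (i j : Fin n) (A : Fin n → Fin n → ℝ) : ℝ :=
  fderiv ℝ (fun B : Fin n → Fin n → ℝ => Real.log (sigmaM k B / sigmaM l B)) A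
    (Pi.single i (Pi.single j 1))

end

noncomputable section
open Finset Set Polynomial

/-- helper: elementary symmetric sum over a finset. -/
def sigE {ι : Type*} [DecidableEq ι] (m : ℕ) (A : Finset ι) (f : ι → ℝ) : ℝ :=
  ∑ s ∈ A.powersetCard m, ∏ i ∈ s, f i

lemma sigE_zero {ι : Type*} [DecidableEq ι] (A : Finset ι) (f : ι → ℝ) :
    sigE 0 A f = 1 := by
  simp [sigE]

lemma sigmaV_eq_sigE {n m : ℕ} (f : Fin n → ℝ) : sigmaV m f = sigE m Finset.univ f := rfl

lemma sigmaV_zero {n : ℕ} (f : Fin n → ℝ) : sigmaV 0 f = 1 := by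
  simp [sigmaV]

lemma sigE_insert {ι : Type*} [DecidableEq ι] {x : ι} {A : Finset ι} (hx : x ∉ A)
    (m : ℕ) (f : ι → ℝ) :
    sigE (m+1) (insert x A) f = sigE (m+1) A f + f x * sigE m A f := by
  unfold sigE
  rw [Finset.powersetCard_succ_insert hx]
  rw [Finset.sum_union]
  · congr 1
    rw [Finset.sum_image, Finset.mul_sum]
    · apply Finset.sum_congr rfl
      intro s hs
      rw [Finset.mem_powersetCard] at hs
      rw [Finset.prod_insert (fun h => hx (hs.1 h))]
    · intro s hs t ht hst
      rw [Finset.mem_coe, Finset.mem_powersetCard] at hs ht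
      have hxs : x ∉ s := fun h => hx (hs.1 h)
      have hxt : x ∉ t := fun h => hx (ht.1 h)
      have := congrArg (fun u => Finset.erase u x) hst
      simpa [Finset.erase_insert hxs, Finset.erase_insert hxt] using this
  · rw [Finset.disjoint_right]
    intro s hs hs'
    rw [Finset.mem_image] at hs
    obtain ⟨t, ht, rfl⟩ := hs
    rw [Finset.mem_powersetCard] at hs' ht
    exact hx (hs'.1 (Finset.mem_insert_self x t))

lemma sigmaVd_eq_sigE {n m : ℕ} (i : Fin n) (lam : Fin n → ℝ) :
    sigmaVd m i lam = sigE m (Finset.univ.erase i) lam := by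
  have hins : insert i (Finset.univ.erase i) = (Finset.univ : Finset (Fin n)) :=
    Finset.insert_erase (Finset.mem_univ i)
  have hcongr : sigE m (Finset.univ.erase i) (Function.update lam i 0)
      = sigE m (Finset.univ.erase i) lam := by
    unfold sigE
    apply Finset.sum_congr rfl
    intro s hs
    rw [Finset.mem_powersetCard] at hs
    apply Finset.prod_congr rfl
    intro j hj
    have : j ≠ i := Finset.ne_of_mem_erase (hs.1 hj)
    rw [Function.update_of_ne this]
  cases m with
  | zero => simp [sigmaVd, sigmaV_zero, sigE_zero]
  | succ m =>
    rw [sigmaVd, sigmaV_eq_sigE]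
    conv_lhs => rw [← hins]
    rw [sigE_insert (Finset.notMem_erase i _), Function.update_self, hcongr]
    ring

lemma sigmaV_recur {n m : ℕ} (i : Fin n) (lam : Fin n → ℝ) :
    sigmaV (m+1) lam = sigmaVd (m+1) i lam + lam i * sigmaVd m i lam := by
  have hins : insert i (Finset.univ.erase i) = (Finset.univ : Finset (Fin n)) :=
    Finset.insert_erase (Finset.mem_univ i)
  rw [sigmaV_eq_sigE, ← hins, sigE_insert (Finset.notMem_erase i _),
    sigmaVd_eq_sigE, sigmaVd_eq_sigE]

lemma sum_sigmaVd {n m : ℕ} (hm : m ≤ n) (lam : Fin n → ℝ) :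
    ∑ i, sigmaVd m i lam = ((n - m : ℕ) : ℝ) * sigmaV m lam := by
  have key : ∀ i : Fin n, sigmaVd m i lam
      = ∑ s ∈ Finset.powersetCard m (Finset.univ : Finset (Fin n)),
          (if i ∈ s then 0 else ∏ j ∈ s, lam j) := by
    intro i
    rw [sigmaVd_eq_sigE]
    unfold sigE
    rw [Finset.sum_ite, Finset.sum_const, smul_zero, zero_add]
    apply Finset.sum_congr
    · ext s
      simp only [Finset.mem_filter, Finset.mem_powersetCard, Finset.subset_erase,
        Finset.subset_univ, true_and]
      tauto
    · intros; rfl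
  simp_rw [key]
  rw [Finset.sum_comm]
  unfold sigmaV
  rw [Finset.mul_sum]
  apply Finset.sum_congr rfl
  intro s hs
  rw [Finset.mem_powersetCard] at hs
  have : ∀ i : Fin n, (if i ∈ s then (0:ℝ) else ∏ j ∈ s, lam j)
      = (∏ j ∈ s, lam j) - (if i ∈ s then ∏ j ∈ s, lam j else 0) := by
    intro i; by_cases h : i ∈ s <;> simp [h]
  simp_rw [this]
  rw [Finset.sum_sub_distrib, Finset.sum_const, Finset.sum_ite_mem,
    Finset.univ_inter, Finset.sum_const, hs.2]
  rw [Finset.card_univ, Fintype.card_fin]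
  have hc : ((n - m : ℕ) : ℝ) = (n : ℝ) - (m : ℝ) := by
    push_cast [hm]; ring
  rw [nsmul_eq_mul, nsmul_eq_mul, hc]
  ring

lemma sigmaV_one {n : ℕ} (f : Fin n → ℝ) : sigmaV 1 f = ∑ i, f i := by
  unfold sigmaV
  rw [Finset.powersetCard_one, Finset.sum_map]
  simp

lemma sigmaVd_one {n : ℕ} (i : Fin n) (f : Fin n → ℝ) :
    sigmaVd 1 i f = (∑ j, f j) - f i := by
  rw [sigmaVd, sigmaV_one, Finset.sum_update_of_mem (Finset.mem_univ i)]
  rw [Finset.sdiff_singleton_eq_erase, Finset.sum_erase_eq_sub (Finset.mem_univ i)]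
  ring

/-- (m+1) σ_{m+1} = Σ_i λ_i σ_m(λ|i). -/
lemma mul_sigmaV_succ {n m : ℕ} (hm : m + 1 ≤ n) (f : Fin n → ℝ) :
    ((m : ℝ) + 1) * sigmaV (m+1) f = ∑ i, f i * sigmaVd m i f := by
  have h1 : ∀ i : Fin n, f i * sigmaVd m i f = sigmaV (m+1) f - sigmaVd (m+1) i f := by
    intro i; rw [sigmaV_recur i f]; ring
  simp_rw [h1]
  rw [Finset.sum_sub_distrib, Finset.sum_const, sum_sigmaVd hm f,
    Finset.card_univ, Fintype.card_fin, nsmul_eq_mul]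
  have : ((n - (m+1) : ℕ) : ℝ) = (n:ℝ) - (m:ℝ) - 1 := by push_cast [hm]; ring
  rw [this]; ring

lemma two_sigmaV_two {n : ℕ} (hn : 2 ≤ n) (f : Fin n → ℝ) :
    2 * sigmaV 2 f = (∑ i, f i)^2 - ∑ i, (f i)^2 := by
  have := mul_sigmaV_succ (m := 1) hn f
  simp_rw [sigmaVd_one] at this
  norm_num at this
  rw [this]
  simp_rw [mul_sub]
  rw [Finset.sum_sub_distrib, ← Finset.sum_mul]
  congr 1
  · ring
  · apply Finset.sum_congr rfl; intros; ring

/-- complement reindexing of a powersetCard sum -/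
lemma sum_powersetCard_compl {n m : ℕ} (hm : m ≤ n) (g : Finset (Fin n) → ℝ) :
    ∑ s ∈ Finset.powersetCard m (Finset.univ : Finset (Fin n)), g s
      = ∑ t ∈ Finset.powersetCard (n - m) (Finset.univ : Finset (Fin n)), g tᶜ := by
  apply Finset.sum_nbij' (fun s => sᶜ) (fun t => tᶜ)
  · intro s hs
    rw [Finset.mem_powersetCard] at hs ⊢
    refine ⟨Finset.subset_univ _, ?_⟩
    rw [Finset.card_compl, hs.2, Fintype.card_fin]
  · intro t ht
    rw [Finset.mem_powersetCard] at ht ⊢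
    refine ⟨Finset.subset_univ _, ?_⟩
    rw [Finset.card_compl, ht.2, Fintype.card_fin]
    omega
  · intro s _; exact compl_compl s
  · intro t _; exact compl_compl t
  · intro s _; rw [compl_compl]

lemma sigmaV_top {N : ℕ} (f : Fin N → ℝ) : sigmaV N f = ∏ i, f i := by
  unfold sigmaV
  have : Finset.powersetCard N (Finset.univ : Finset (Fin N)) = {Finset.univ} := by
    have := Finset.powersetCard_self (Finset.univ : Finset (Fin N))
    rwa [Finset.card_univ, Fintype.card_fin] at this
  rw [this, Finset.sum_singleton]

lemma sigmaV_factor {N m : ℕ} (hm : m ≤ N) (f : Fin N → ℝ) (hf : ∀ i, f i ≠ 0) :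
    sigmaV m f = (∏ i, f i) * sigmaV (N - m) (fun i => (f i)⁻¹) := by
  unfold sigmaV
  rw [Finset.mul_sum, sum_powersetCard_compl (by omega : N - m ≤ N)]
  have hc : N - (N - m) = m := by omega
  rw [hc]
  apply Finset.sum_congr rfl
  intro t _
  have hinv : (∏ i ∈ tᶜ, (fun i => (f i)⁻¹) i) = (∏ i ∈ tᶜ, f i)⁻¹ := by
    simp only []
    rw [← Finset.prod_inv_distrib]
  rw [hinv]
  have hne : (∏ i ∈ tᶜ, f i) ≠ 0 := Finset.prod_ne_zero_iff.2 (fun i _ => hf i)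
  rw [eq_mul_inv_iff_mul_eq₀ hne, Finset.prod_mul_prod_compl t f]

lemma base_ineq {N : ℕ} (hN : 2 ≤ N) (f : Fin N → ℝ) :
    sigmaV N f * sigmaV (N-2) f * ((N:ℝ))^2
      ≤ (sigmaV (N-1) f)^2 * ((N.choose 2 : ℕ) : ℝ) := by
  by_cases hf : ∀ i, f i ≠ 0
  · set τ : Fin N → ℝ := fun i => (f i)⁻¹ with hτ
    have hP : (∏ i, f i) ≠ 0 := Finset.prod_ne_zero_iff.2 (fun i _ => hf i)
    have e1 : sigmaV (N-1) f = (∏ i, f i) * sigmaV 1 τ := by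
      have := sigmaV_factor (by omega : N - 1 ≤ N) f hf
      rwa [show N - (N-1) = 1 by omega] at this
    have e2 : sigmaV (N-2) f = (∏ i, f i) * sigmaV 2 τ := by
      have := sigmaV_factor (by omega : N - 2 ≤ N) f hf
      rwa [show N - (N-2) = 2 by omega] at this
    rw [e1, e2, sigmaV_top]
    have h2 : 2 * sigmaV 2 τ = (∑ i, τ i)^2 - ∑ i, (τ i)^2 := two_sigmaV_two hN τ
    have hcs : (∑ i, τ i)^2 ≤ (N:ℝ) * ∑ i, (τ i)^2 := by
      have := sq_sum_le_card_mul_sum_sq (s := (Finset.univ : Finset (Fin N))) (f := τ)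
      simpa [Finset.card_univ] using this
    have hch : ((N.choose 2 : ℕ) : ℝ) * 2 = (N:ℝ) * ((N:ℝ) - 1) := by
      have : N.choose 2 * 2 = N.choose 1 * (N - 1) := Nat.choose_succ_right_eq N 1
      have h' : (N.choose 2 * 2 : ℕ) = (N * (N-1) : ℕ) := by rwa [Nat.choose_one_right] at this
      have := congrArg (fun x : ℕ => (x : ℝ)) h'
      push_cast [show 1 ≤ N by omega] at this
      linarith
    have hsq : (0:ℝ) ≤ (∏ i, f i)^2 := sq_nonneg _
    rw [sigmaV_one]
    -- goal: ∏f * (∏f * σ₂) * N² ≤ (∏f * Στ)² * choose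
    have key : sigmaV 2 τ * (N:ℝ)^2 ≤ (∑ i, τ i)^2 * ((N.choose 2 : ℕ) : ℝ) := by
      nlinarith [hcs, h2, sq_nonneg ((N:ℝ))]
    nlinarith [key, hsq]
  · push_neg at hf
    obtain ⟨i, hi⟩ := hf
    have hP : sigmaV N f = 0 := by
      rw [sigmaV_top]
      exact Finset.prod_eq_zero (Finset.mem_univ i) hi
    rw [hP, zero_mul, zero_mul]
    positivity

/-- esymm of a multiset as sigmaV of its list of entries. -/
lemma esymm_eq_sigmaV (u : Multiset ℝ) (m : ℕ) :
    u.esymm m = sigmaV m (fun i : Fin u.toList.length => u.toList.get i) := by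
  have h1 : (Finset.univ.val.map (fun i : Fin u.toList.length => u.toList.get i)) = u := by
    rw [Fin.univ_val_map]
    rw [show (fun i : Fin u.toList.length => u.toList.get i) = u.toList.get from rfl]
    rw [List.ofFn_get]
    exact u.coe_toList
  conv_lhs => rw [← h1]
  rw [Finset.esymm_map_val]
  rfl

/-- the product polynomial ∏ (X + C r). -/
lemma prodXC_basic (u : Multiset ℝ) :
    (u.map (fun r => X + C r)).prod.Monic
    ∧ (u.map (fun r => X + C r)).prod.natDegree = Multiset.card u
    ∧ (u.map (fun r => X + C r)).prod.roots = u.map (fun r => -r) := by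
  refine ⟨?_, ?_, ?_⟩
  · exact monic_multiset_prod_of_monic _ _ (fun r _ => monic_X_add_C r)
  · rw [natDegree_multiset_prod_of_monic _ (fun q hq => by
      obtain ⟨r, _, rfl⟩ := Multiset.mem_map.mp hq; exact monic_X_add_C r)]
    rw [Multiset.map_map]
    simp [Function.comp, natDegree_X_add_C]
  · have : u.map (fun r => X + C r) = (u.map (fun r => -r)).map (fun r => X - C r) := by
      rw [Multiset.map_map]
      apply Multiset.map_congr rfl
      intro r _
      simp [sub_eq_add_neg]
    rw [this, roots_multiset_prod_X_sub_C]

set_option maxHeartbeats 1000000 in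
/-- Newton's inequality for arbitrary real multisets. -/
lemma newton_esymm : ∀ N : ℕ, ∀ u : Multiset ℝ, Multiset.card u = N →
    ∀ j : ℕ, 1 ≤ j → j + 1 ≤ N →
    u.esymm (j+1) * u.esymm (j-1) * ((N.choose j : ℕ) : ℝ)^2
      ≤ (u.esymm j)^2 * ((N.choose (j-1) : ℕ) : ℝ) * ((N.choose (j+1) : ℕ) : ℝ) := by
  intro N
  induction N with
  | zero => intro u hu j hj hjN; omega
  | succ N IH =>
    intro u hu j hj hjN
    by_cases hbase : j + 1 = N + 1
    -- base case: j = N, top inequality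
    · have hje : j = N := by omega
      rw [hje]
      obtain ⟨M, f, hM1, hM2⟩ : ∃ (M : ℕ) (f : Fin M → ℝ), M = N + 1 ∧
          ∀ m, u.esymm m = sigmaV m f :=
        ⟨u.toList.length, fun i => u.toList.get i,
          by rw [Multiset.length_toList, hu], fun m => esymm_eq_sigmaV u m⟩
      subst hM1
      rw [hM2 (N+1), hM2 (N-1), hM2 N]
      have hbi := base_ineq (N := N+1) (by omega) f
      rw [show N+1-2 = N-1 by omega, show N+1-1 = N by omega] at hbi
      have c1 : (N+1).choose N = N + 1 := Nat.choose_succ_self_right N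
      have c2 : (N+1).choose (N-1) = (N+1).choose 2 := by
        rw [show N - 1 = (N+1) - 2 by omega]
        exact Nat.choose_symm (by omega)
      have c3 : (N+1).choose (N+1) = 1 := Nat.choose_self _
      rw [c1, c2, c3]
      push_cast at hbi ⊢
      nlinarith [hbi]
    -- inductive step via derivative
    · have hjN2 : j + 1 ≤ N := by omega
      set p : ℝ[X] := (u.map (fun r => X + C r)).prod with hp
      obtain ⟨hmon, hdeg, hroots⟩ := prodXC_basic u
      rw [← hp] at hmon hdeg hroots
      rw [hu] at hdeg
      have hcr : Multiset.card p.roots = N + 1 := by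
        rw [hroots, Multiset.card_map, hu]
      have hcoeff : ∀ t : ℕ, t ≤ N + 1 → p.coeff t = u.esymm (N + 1 - t) := by
        intro t ht
        rw [hp, Multiset.prod_X_add_C_coeff u (by omega : t ≤ Multiset.card u), hu]
      set q : ℝ[X] := derivative p with hq
      have hqc : ∀ t : ℕ, q.coeff t = p.coeff (t+1) * ((t:ℝ)+1) := by
        intro t; rw [hq, coeff_derivative]; try push_cast; try ring
      have hqN : q.coeff N = ((N:ℝ)+1) := by
        rw [hqc, show p.coeff (N+1) = 1 from by
          have := hmon.coeff_natDegree; rwa [hdeg] at this]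
        ring
      have hqdeg : q.natDegree = N := by
        apply le_antisymm
        · have := natDegree_derivative_le p
          rw [hdeg] at this; exact this.trans (by omega)
        · apply le_natDegree_of_ne_zero
          rw [hqN]; positivity
      have hqne : q ≠ 0 := fun h => by simp [h] at hqN; linarith [hqN]
      have hqroots : Multiset.card q.roots = N := by
        apply le_antisymm
        · have := Polynomial.card_roots' q; rwa [hqdeg] at this
        · have := Polynomial.card_roots_le_derivative p
          rw [hcr, ← hq] at this; omega
      set c : ℝ := ((N:ℝ)+1)⁻¹ with hc
      have hcne : c ≠ 0 := by rw [hc]; positivity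
      have hNne : ((N:ℝ)+1) ≠ 0 := by positivity
      set q1 : ℝ[X] := C c * q with hq1
      have hq1deg : q1.natDegree = N := by rw [hq1, natDegree_C_mul hcne, hqdeg]
      have hq1mon : q1.Monic := by
        have : q1.leadingCoeff = 1 := by
          rw [Polynomial.leadingCoeff, hq1deg, hq1, coeff_C_mul, hqN, hc]
          field_simp
        exact this
      have hq1roots : q1.roots = q.roots := roots_C_mul q hcne
      have hq1split : q1.Splits := by
        rw [splits_iff_card_roots, hq1roots, hq1deg, hqroots]
      set w : Multiset ℝ := q1.roots.map (fun r => -r) with hw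
      have hwcard : Multiset.card w = N := by rw [hw, Multiset.card_map, hq1roots, hqroots]
      have hq1prod : q1 = (w.map (fun r => X + C r)).prod := by
        have h0 := hq1split.eq_prod_roots_of_monic hq1mon
        rw [h0, hw, Multiset.map_map]
        congr 1
        apply Multiset.map_congr rfl
        intro r _
        simp [sub_eq_add_neg]
      have hwe : ∀ m : ℕ, m ≤ N → w.esymm m = c * (((N:ℝ) + 1 - m) * u.esymm m) := by
        intro m hm
        have h1 : q1.coeff (N - m) = w.esymm m := by
          rw [hq1prod, Multiset.prod_X_add_C_coeff w (by omega : N - m ≤ Multiset.card w),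
            hwcard, show N - (N - m) = m by omega]
        rw [← h1, hq1, coeff_C_mul, hqc, hcoeff (N - m + 1) (by omega),
          show N + 1 - (N - m + 1) = m by omega]
        have : ((N - m : ℕ) : ℝ) + 1 = (N:ℝ) + 1 - m := by
          push_cast [Nat.cast_sub (by omega : m ≤ N)]; ring
        rw [this]
        ring
      -- apply IH to w
      have hIH := IH w hwcard j hj hjN2
      rw [hwe (j+1) (by omega), hwe (j-1) (by omega), hwe j (by omega)] at hIH
      -- choose identities
      have chooseR : ∀ m : ℕ, m ≤ N + 1 →
          ((N:ℝ)+1) * ((N.choose m : ℕ) : ℝ)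
            = ((N:ℝ) + 1 - m) * (((N+1).choose m : ℕ) : ℝ) := by
        intro m _
        cases m with
        | zero => simp
        | succ m =>
          have h1 : (N+1) * N.choose m = (N+1).choose (m+1) * (m+1) :=
            Nat.add_one_mul_choose_eq N m
          have h2 : (N+1).choose (m+1) = N.choose m + N.choose (m+1) :=
            Nat.choose_succ_succ N m
          have h1' : ((N:ℝ)+1) * ((N.choose m : ℕ) : ℝ)
              = (((N+1).choose (m+1) : ℕ) : ℝ) * ((m:ℝ)+1) := by exact_mod_cast h1
          have h2' : (((N+1).choose (m+1) : ℕ) : ℝ)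
              = ((N.choose m : ℕ) : ℝ) + ((N.choose (m+1) : ℕ) : ℝ) := by exact_mod_cast h2
          push_cast
          nlinarith [h1', h2']
      have hj1R : ((j-1 : ℕ) : ℝ) = (j:ℝ) - 1 := by
        push_cast [Nat.cast_sub (by omega : 1 ≤ j)]; ring
      have hcast : ∀ m : ℕ, m ≤ N + 1 →
          ((N.choose m : ℕ) : ℝ) = ((N:ℝ) + 1 - m) * c * (((N+1).choose m : ℕ) : ℝ) := by
        intro m hm
        have := chooseR m hm
        rw [hc]; field_simp
        linarith [this]
      rw [hcast (j+1) (by omega), hcast (j-1) (by omega), hcast j (by omega)] at hIH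
      rw [hj1R] at hIH
      -- now clear positive factors
      set x := u.esymm (j+1)
      set y := u.esymm j
      set z := u.esymm (j-1)
      set A1 := (((N+1).choose (j+1) : ℕ) : ℝ)
      set A2 := (((N+1).choose j : ℕ) : ℝ)
      set A3 := (((N+1).choose (j-1) : ℕ) : ℝ)
      have hr1 : (0:ℝ) < (N:ℝ) - j := by
        have : (j:ℝ) + 1 ≤ (N:ℝ) := by exact_mod_cast hjN2
        linarith
      have hcpos : 0 < c := by rw [hc]; positivity
      -- hIH : c*((N+1-(j+1))*x) * (c*((N+1-(j-1))*z)) * ((N+1-j)*c*A2)^2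
      --        ≤ (c*((N+1-j)*y))^2 * ((N+1-(j-1))*c*A3) * ((N+1-(j+1))*c*A1)
      have hIH' := hIH
      push_cast at hIH'
      have goal' : x * z * A2^2 * ((((N:ℝ) - j) * ((N:ℝ) + 2 - j) * ((N:ℝ)+1-j)^2) * c^4)
          ≤ y^2 * A3 * A1 * ((((N:ℝ) - j) * ((N:ℝ) + 2 - j) * ((N:ℝ)+1-j)^2) * c^4) := by
        calc x * z * A2^2 * ((((N:ℝ) - j) * ((N:ℝ) + 2 - j) * ((N:ℝ)+1-j)^2) * c^4)
            = c*(((N:ℝ)+1-(j+1))*x) * (c*(((N:ℝ)+1-((j:ℝ)-1))*z)) * (((N:ℝ)+1-j)*c*A2)^2 := by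
              ring
          _ ≤ (c*(((N:ℝ)+1-j)*y))^2 * (((N:ℝ)+1-((j:ℝ)-1))*c*A3) * (((N:ℝ)+1-(j+1))*c*A1) := by
              exact_mod_cast hIH'
          _ = y^2 * A3 * A1 * ((((N:ℝ) - j) * ((N:ℝ) + 2 - j) * ((N:ℝ)+1-j)^2) * c^4) := by
              ring
      have hfac : (0:ℝ) < (((N:ℝ) - j) * ((N:ℝ) + 2 - j) * ((N:ℝ)+1-j)^2) * c^4 := by
        have h1 : (0:ℝ) < (N:ℝ) + 2 - j := by linarith
        have h2 : (0:ℝ) < ((N:ℝ)+1-j)^2 := by nlinarith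
        exact mul_pos (mul_pos (mul_pos hr1 h1) h2) (by positivity)
      exact le_of_mul_le_mul_right goal' hfac

lemma newton_fin {N : ℕ} (f : Fin N → ℝ) (j : ℕ) (hj : 1 ≤ j) (hjN : j + 1 ≤ N) :
    sigmaV (j+1) f * sigmaV (j-1) f * ((N.choose j : ℕ) : ℝ)^2
      ≤ (sigmaV j f)^2 * ((N.choose (j-1) : ℕ) : ℝ) * ((N.choose (j+1) : ℕ) : ℝ) := by
  have hcard : Multiset.card (Finset.univ.val.map f) = N := by
    rw [Multiset.card_map]; simp
  have he : ∀ m, (Finset.univ.val.map f).esymm m = sigmaV m f := by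
    intro m; rw [Finset.esymm_map_val]; rfl
  have := newton_esymm N (Finset.univ.val.map f) hcard j hj hjN
  rwa [he, he, he] at this

lemma choose_cast_pos {N m : ℕ} (h : m ≤ N) : (0:ℝ) < ((N.choose m : ℕ) : ℝ) :=
  Nat.cast_pos.mpr (Nat.choose_pos h)

lemma ratio_step {N : ℕ} (f : Fin N → ℝ) (m : ℕ) (hm : 1 ≤ m) (hmN : m + 1 ≤ N)
    (h1 : 0 < sigmaV m f) (h2 : 0 < sigmaV (m-1) f) :
    sigmaV (m+1) f * ((N.choose m : ℕ) : ℝ) / (sigmaV m f * ((N.choose (m+1) : ℕ) : ℝ))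
      ≤ sigmaV m f * ((N.choose (m-1) : ℕ) : ℝ)
          / (sigmaV (m-1) f * ((N.choose m : ℕ) : ℝ)) := by
  have hc1 := choose_cast_pos (show m + 1 ≤ N from hmN)
  have hc2 := choose_cast_pos (show m ≤ N by omega)
  have hc3 := choose_cast_pos (show m - 1 ≤ N by omega)
  rw [div_le_div_iff₀ (by positivity) (by positivity)]
  have hn := newton_fin f m hm hmN
  nlinarith [hn]

lemma newton_chain {N : ℕ} (f : Fin N → ℝ) (k l : ℕ) (hl : 1 ≤ l) (hlk : l ≤ k)
    (hkN : k ≤ N) (hpos : ∀ m, m ≤ k → 0 < sigmaV m f) :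
    sigmaV k f * sigmaV (l-1) f * (((N.choose (k-1) : ℕ) : ℝ) * ((N.choose l : ℕ) : ℝ))
      ≤ sigmaV (k-1) f * sigmaV l f
          * (((N.choose k : ℕ) : ℝ) * ((N.choose (l-1) : ℕ) : ℝ)) := by
  set g : ℕ → ℝ := fun m =>
    sigmaV (m+1) f * ((N.choose m : ℕ) : ℝ) / (sigmaV m f * ((N.choose (m+1) : ℕ) : ℝ))
    with hg
  have mono : ∀ d : ℕ, (l-1) + d ≤ k - 1 → g ((l-1) + d) ≤ g (l-1) := by
    intro d
    induction d with
    | zero => intro _; rw [Nat.add_zero]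
    | succ d IHd =>
      intro hd
      have step : g ((l-1) + (d+1)) ≤ g ((l-1) + d) := by
        have e1 : (l-1) + (d+1) = (l + d - 1) + 1 := by omega
        have e2 : (l-1) + d = l + d - 1 := by omega
        rw [e1, e2]
        have := ratio_step f ((l + d - 1) + 1) (by omega) (by omega)
          (hpos _ (by omega)) (hpos _ (by omega))
        rw [show (l + d - 1) + 1 - 1 = l + d - 1 from by omega] at this
        exact this
      exact step.trans (IHd (by omega))
  have hchain := mono (k - l) (by omega)
  rw [show (l-1) + (k-l) = k - 1 from by omega] at hchain
  rw [hg] at hchain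
  simp only at hchain
  rw [show (k-1) + 1 = k from by omega, show (l-1) + 1 = l from by omega] at hchain
  have d1 : 0 < sigmaV (k-1) f * ((N.choose k : ℕ) : ℝ) :=
    mul_pos (hpos _ (by omega)) (choose_cast_pos (by omega))
  have d2 : 0 < sigmaV (l-1) f * ((N.choose l : ℕ) : ℝ) :=
    mul_pos (hpos _ (by omega)) (choose_cast_pos (by omega))
  rw [div_le_div_iff₀ d1 d2] at hchain
  nlinarith [hchain]

/-- transfer: σ_m with index 0 removed equals σ_m of the tail vector. -/
lemma sigmaVd_zero_eq {N m : ℕ} (lam : Fin (N+1) → ℝ) (i0 : Fin (N+1)) (h0 : i0 = 0) :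
    sigmaVd m i0 lam = sigmaV m (fun i : Fin N => lam i.succ) := by
  rw [sigmaVd_eq_sigE, h0]
  have huniv : (Finset.univ : Finset (Fin (N+1))).erase 0
      = Finset.univ.map ⟨Fin.succ, Fin.succ_injective N⟩ := by
    rw [Fin.univ_succ]
    rw [Finset.erase_cons]
  rw [huniv]
  unfold sigE sigmaV
  rw [Finset.powersetCard_map, Finset.sum_map]
  apply Finset.sum_congr rfl
  intro s _
  have hemb : (Finset.mapEmbedding (⟨Fin.succ, Fin.succ_injective N⟩ : Fin N ↪ Fin (N+1))).toEmbedding s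
      = s.map ⟨Fin.succ, Fin.succ_injective N⟩ := rfl
  rw [hemb, Finset.prod_map]
  rfl


end

set_option maxHeartbeats 2000000 in
/-- Lemma 2.4: if λ ∈ Γ_k (k ≥ 1) and λ_1 < 0, then σ_m(λ|1) ≥ σ_m(λ)
for all 0 ≤ m ≤ k, and for all 0 ≤ l < k,
∂[σ_k/σ_l]/∂λ_1 ≥ (n/k)·((k−l)/(n−l))·(1/(n−k+1))·Σ_i ∂[σ_k/σ_l]/∂λ_i. -/
theorem statement_17 (n k : ℕ) (hk : 1 ≤ k) (hkn : k ≤ n)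
    (lam : Fin n → ℝ) (hΓ : GammaV k lam)
    (h1 : lam (⟨0, by omega⟩ : Fin n) < 0) :
    (∀ m, m ≤ k → sigmaV m lam ≤ sigmaVd m (⟨0, by omega⟩ : Fin n) lam) ∧
    (∀ l, l < k →
      (n : ℝ) / (k : ℝ) * (((k : ℝ) - (l : ℝ)) / ((n : ℝ) - (l : ℝ)))
          * (1 / ((n : ℝ) - (k : ℝ) + 1)) * (∑ i, dQuotV k l i lam)
        ≤ dQuotV k l (⟨0, by omega⟩ : Fin n) lam) := by
  have hn1 : 1 ≤ n := le_trans hk hkn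
  set i0 : Fin n := ⟨0, by omega⟩ with hi0
  -- Part 1 and positivity of truncated sigmas
  have key : ∀ m, m ≤ k → 0 < sigmaVd m i0 lam ∧ sigmaV m lam ≤ sigmaVd m i0 lam := by
    intro m
    induction m with
    | zero =>
      intro _
      rw [sigmaVd, sigmaV_zero, sigmaV_zero]
      exact ⟨one_pos, le_refl 1⟩
    | succ m IH =>
      intro hm
      obtain ⟨hpos, _⟩ := IH (by omega)
      have hrec := sigmaV_recur i0 lam (m := m)
      have hσ := hΓ (m+1) (by omega) hm
      have hneg : lam i0 * sigmaVd m i0 lam < 0 := mul_neg_of_neg_of_pos h1 hpos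
      constructor
      · linarith
      · linarith
  -- k < n (otherwise contradiction)
  have hkn2 : k + 1 ≤ n := by
    rcases Nat.lt_or_ge k n with h | h
    · omega
    · exfalso
      have hkeq : k = n := by omega
      have h0 : sigmaVd n i0 lam = 0 := by
        rw [sigmaVd, sigmaV_top]
        apply Finset.prod_eq_zero (Finset.mem_univ i0)
        rw [Function.update_self]
      have := (key n (by omega)).1
      rw [h0] at this
      exact lt_irrefl 0 this
  constructor
  · intro m hm; exact (key m hm).2
  · intro l hl
    -- dimension reduction
    obtain ⟨N, rfl⟩ : ∃ N, n = N + 1 := ⟨n - 1, by omega⟩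
    have h00 : i0 = 0 := by
      apply Fin.ext; simp [hi0]
    set ν : Fin N → ℝ := fun i => lam i.succ with hν
    have htr : ∀ m, sigmaVd m i0 lam = sigmaV m ν := fun m => sigmaVd_zero_eq lam i0 h00
    -- abbreviations
    have hb0 : sigmaV 0 lam = 1 := sigmaV_zero lam
    have hbl_pos : 0 < sigmaV l lam := by
      rcases Nat.eq_zero_or_pos l with h | h
      · rw [h, hb0]; norm_num
      · exact hΓ l h (by omega)
    have hD : (0:ℝ) < (sigmaV l lam)^2 := by positivity
    -- sum of dQuotV
    have hcast1 : ((N + 1 - (k-1) : ℕ) : ℝ) = (N:ℝ) + 1 - (k:ℝ) + 1 := by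
      rw [Nat.cast_sub (by omega)]
      rw [Nat.cast_sub (by omega)]
      push_cast; ring
    have hsum1 : ∑ i, sigmaVd (k-1) i lam = ((N:ℝ) + 1 - (k:ℝ) + 1) * sigmaV (k-1) lam := by
      rw [sum_sigmaVd (by omega) lam, hcast1]
    -- case split on l = 0
    by_cases hl0 : l = 0
    · subst hl0
      have hq : ∀ i : Fin (N+1), dQuotV k 0 i lam = sigmaVd (k-1) i lam := by
        intro i
        unfold dQuotV
        rw [if_pos rfl, hb0]
        norm_num
      simp_rw [hq]
      rw [hsum1]
      have hkey := (key (k-1) (by omega)).2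
      have hkR : (0:ℝ) < (k:ℝ) := by positivity
      have hnRp : (0:ℝ) < (N:ℝ) + 1 := by positivity
      have hnk : (0:ℝ) < (N:ℝ) + 1 - (k:ℝ) + 1 := by
        have : (k:ℝ) ≤ (N:ℝ) + 1 := by exact_mod_cast hkn
        linarith
      refine le_trans (le_of_eq ?_) hkey
      push_cast
      field_simp
      ring
    · -- l ≥ 1
      push_cast
      have hl1 : 1 ≤ l := by omega
      have hcast2 : ((N + 1 - (l-1) : ℕ) : ℝ) = (N:ℝ) + 1 - (l:ℝ) + 1 := by
        rw [Nat.cast_sub (by omega), Nat.cast_sub (by omega)]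
        push_cast; ring
      have hsum2 : ∑ i, sigmaVd (l-1) i lam = ((N:ℝ) + 1 - (l:ℝ) + 1) * sigmaV (l-1) lam := by
        rw [sum_sigmaVd (by omega) lam, hcast2]
      -- notation
      set bl := sigmaV l lam
      set bk := sigmaV k lam
      set bk1 := sigmaV (k-1) lam
      set bl1 := sigmaV (l-1) lam
      set ak := sigmaVd k i0 lam
      set ak1 := sigmaVd (k-1) i0 lam
      set al := sigmaVd l i0 lam
      set al1 := sigmaVd (l-1) i0 lam
      -- sum formula
      have hsumQ : ∑ i, dQuotV k l i lam
          = ((((N:ℝ) + 1 - (k:ℝ) + 1) * bk1) * bl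
              - bk * (((N:ℝ) + 1 - (l:ℝ) + 1) * bl1)) / bl^2 := by
        unfold dQuotV
        rw [← Finset.sum_div]
        congr 1
        simp_rw [if_neg hl0]
        rw [Finset.sum_sub_distrib, ← Finset.sum_mul, ← Finset.mul_sum, hsum1, hsum2]
      -- target numerator
      have hq0 : dQuotV k l i0 lam = (ak1 * bl - bk * al1) / bl^2 := by
        unfold dQuotV
        rw [if_neg hl0]
      -- basic positivity
      have hak_pos := (key k (le_refl k)).1
      have hak1_pos := (key (k-1) (by omega)).1
      have hal_pos := (key l (by omega)).1
      have hal1_pos := (key (l-1) (by omega)).1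
      have hbk1_le := (key (k-1) (by omega)).2
      have hbl_le := (key l (by omega)).2
      have hbl1_le := (key (l-1) (by omega)).2
      have hbk_pos : 0 < bk := hΓ k (by omega) (le_refl k)
      have hbk1_pos : 0 < bk1 := by
        rcases Nat.eq_zero_or_pos (k-1) with h | h
        · have : sigmaV (k-1) lam = 1 := by rw [h]; exact sigmaV_zero lam
          rw [show bk1 = sigmaV (k-1) lam from rfl, this]; norm_num
        · exact hΓ (k-1) h (by omega)
      have hbl1_pos : 0 < bl1 := by
        rcases Nat.eq_zero_or_pos (l-1) with h | h
        · have : sigmaV (l-1) lam = 1 := by rw [h]; exact sigmaV_zero lam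
          rw [show bl1 = sigmaV (l-1) lam from rfl, this]; norm_num
        · exact hΓ (l-1) h (by omega)
      -- recursion identities
      have hreck : bk = ak + lam i0 * ak1 := by
        have := sigmaV_recur i0 lam (m := k-1)
        rw [show (k-1) + 1 = k from by omega] at this
        exact this
      have hrecl : bl = al + lam i0 * al1 := by
        have := sigmaV_recur i0 lam (m := l-1)
        rw [show (l-1) + 1 = l from by omega] at this
        exact this
      -- identity (ii)
      have hid : ak1 * bl - bk * al1 = ak1 * al - ak * al1 := by
        rw [hreck, hrecl]; ring
      -- Newton chain on ν
      have hch := newton_chain ν k l hl1 (by omega) (by omega)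
        (fun m hm => by rw [← htr m]; exact (key m hm).1)
      rw [← htr k, ← htr (k-1), ← htr l, ← htr (l-1)] at hch
      -- choose identities: C(N,k)*k = C(N,k-1)*(N-(k-1)), cast
      have hchk : ((N.choose k : ℕ) : ℝ) * (k:ℝ)
          = ((N.choose (k-1) : ℕ) : ℝ) * ((N:ℝ) + 1 - (k:ℝ)) := by
        have h := Nat.choose_succ_right_eq N (k-1)
        rw [show (k-1) + 1 = k from by omega] at h
        have h' : ((N.choose k * k : ℕ) : ℝ) = ((N.choose (k-1) * (N - (k-1)) : ℕ) : ℝ) := by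
          exact_mod_cast h
        rw [Nat.cast_mul, Nat.cast_mul, Nat.cast_sub (by omega), Nat.cast_sub (by omega)] at h'
        push_cast at h'
        rw [h']; ring
      have hchl : ((N.choose l : ℕ) : ℝ) * (l:ℝ)
          = ((N.choose (l-1) : ℕ) : ℝ) * ((N:ℝ) + 1 - (l:ℝ)) := by
        have h := Nat.choose_succ_right_eq N (l-1)
        rw [show (l-1) + 1 = l from by omega] at h
        have h' : ((N.choose l * l : ℕ) : ℝ) = ((N.choose (l-1) * (N - (l-1)) : ℕ) : ℝ) := by
          exact_mod_cast h
        rw [Nat.cast_mul, Nat.cast_mul, Nat.cast_sub (by omega), Nat.cast_sub (by omega)] at h'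
        push_cast at h'
        rw [h']; ring
      have hCk1 : (0:ℝ) < ((N.choose (k-1) : ℕ) : ℝ) :=
        Nat.cast_pos.mpr (Nat.choose_pos (by omega))
      have hCl1 : (0:ℝ) < ((N.choose (l-1) : ℕ) : ℝ) :=
        Nat.cast_pos.mpr (Nat.choose_pos (by omega))
      have hkR : (0:ℝ) < (k:ℝ) := by positivity
      have hlR : (0:ℝ) < (l:ℝ) := by
        exact_mod_cast hl1
      -- (iv): ak * al1 * (k * (n - l)) ≤ ak1 * al * (l * (n - k)), with n = N+1
      have hnlR : (0:ℝ) < (N:ℝ) + 1 - (l:ℝ) := by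
        have : (l:ℝ) + 1 ≤ (N:ℝ) + 1 := by
          have : l + 1 ≤ N + 1 := by omega
          exact_mod_cast this
        linarith
      have hnkR : (0:ℝ) < (N:ℝ) + 1 - (k:ℝ) := by
        have : (k:ℝ) + 1 ≤ (N:ℝ) + 1 := by exact_mod_cast hkn2
        linarith
      have hiv : ak * al1 * ((k:ℝ) * ((N:ℝ) + 1 - (l:ℝ)))
          ≤ ak1 * al * ((l:ℝ) * ((N:ℝ) + 1 - (k:ℝ))) := by
        have hmul : ak * al1 * (((N.choose (k-1) : ℕ) : ℝ) * ((N.choose l : ℕ) : ℝ)) * ((k:ℝ) * (l:ℝ))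
            ≤ ak1 * al * (((N.choose k : ℕ) : ℝ) * ((N.choose (l-1) : ℕ) : ℝ)) * ((k:ℝ) * (l:ℝ)) := by
          apply mul_le_mul_of_nonneg_right hch
          positivity
        have lhs_eq : ak * al1 * (((N.choose (k-1) : ℕ) : ℝ) * ((N.choose l : ℕ) : ℝ)) * ((k:ℝ) * (l:ℝ))
            = (ak * al1 * ((k:ℝ) * ((N:ℝ) + 1 - (l:ℝ)))) * (((N.choose (k-1) : ℕ) : ℝ) * ((N.choose (l-1) : ℕ) : ℝ)) := by
          calc ak * al1 * (((N.choose (k-1) : ℕ) : ℝ) * ((N.choose l : ℕ) : ℝ)) * ((k:ℝ) * (l:ℝ))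
              = ak * al1 * ((N.choose (k-1) : ℕ) : ℝ) * (k:ℝ) * (((N.choose l : ℕ) : ℝ) * (l:ℝ)) := by ring
            _ = ak * al1 * ((N.choose (k-1) : ℕ) : ℝ) * (k:ℝ) * (((N.choose (l-1) : ℕ) : ℝ) * ((N:ℝ) + 1 - (l:ℝ))) := by rw [hchl]
            _ = (ak * al1 * ((k:ℝ) * ((N:ℝ) + 1 - (l:ℝ)))) * (((N.choose (k-1) : ℕ) : ℝ) * ((N.choose (l-1) : ℕ) : ℝ)) := by ring
        have rhs_eq : ak1 * al * (((N.choose k : ℕ) : ℝ) * ((N.choose (l-1) : ℕ) : ℝ)) * ((k:ℝ) * (l:ℝ))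
            = (ak1 * al * ((l:ℝ) * ((N:ℝ) + 1 - (k:ℝ)))) * (((N.choose (k-1) : ℕ) : ℝ) * ((N.choose (l-1) : ℕ) : ℝ)) := by
          calc ak1 * al * (((N.choose k : ℕ) : ℝ) * ((N.choose (l-1) : ℕ) : ℝ)) * ((k:ℝ) * (l:ℝ))
              = ak1 * al * (((N.choose k : ℕ) : ℝ) * (k:ℝ)) * (((N.choose (l-1) : ℕ) : ℝ) * (l:ℝ)) := by ring
            _ = ak1 * al * (((N.choose (k-1) : ℕ) : ℝ) * ((N:ℝ) + 1 - (k:ℝ))) * (((N.choose (l-1) : ℕ) : ℝ) * (l:ℝ)) := by rw [hchk]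
            _ = (ak1 * al * ((l:ℝ) * ((N:ℝ) + 1 - (k:ℝ)))) * (((N.choose (k-1) : ℕ) : ℝ) * ((N.choose (l-1) : ℕ) : ℝ)) := by ring
        rw [lhs_eq, rhs_eq] at hmul
        exact le_of_mul_le_mul_right hmul (by positivity)
      -- final numerator inequality
      have hklR : (0:ℝ) < (k:ℝ) - (l:ℝ) := by
        have : (l:ℝ) + 1 ≤ (k:ℝ) := by exact_mod_cast hl
        linarith
      have hnk1R : (0:ℝ) < (N:ℝ) + 1 - (k:ℝ) + 1 := by linarith
      have hnRp : (0:ℝ) < (N:ℝ) + 1 := by positivity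
      set cc : ℝ := ((N:ℝ) + 1) / (k:ℝ) * (((k:ℝ) - (l:ℝ)) / ((N:ℝ) + 1 - (l:ℝ)))
          * (1 / ((N:ℝ) + 1 - (k:ℝ) + 1)) with hcc
      set c2 : ℝ := ((N:ℝ) + 1) * ((k:ℝ) - (l:ℝ)) / ((k:ℝ) * ((N:ℝ) + 1 - (l:ℝ))) with hc2
      have hnlR' : (0:ℝ) < (N:ℝ) + 1 - (l:ℝ) := hnlR
      have hccpos : 0 < cc := by
        rw [hcc]
        exact mul_pos (mul_pos (div_pos hnRp hkR) (div_pos hklR hnlR'))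
          (div_pos one_pos hnk1R)
      have hc2pos : 0 < c2 := by
        rw [hc2]
        exact div_pos (mul_pos hnRp hklR) (mul_pos hkR hnlR')
      have hcr : cc * ((N:ℝ) + 1 - (k:ℝ) + 1) = c2 := by
        rw [hcc, hc2]
        field_simp
      have hnum : cc * ((((N:ℝ) + 1 - (k:ℝ) + 1) * bk1) * bl
            - bk * (((N:ℝ) + 1 - (l:ℝ) + 1) * bl1))
          ≤ ak1 * bl - bk * al1 := by
        have hS2 : 0 ≤ cc * (bk * (((N:ℝ) + 1 - (l:ℝ) + 1) * bl1)) := by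
          apply mul_nonneg hccpos.le
          apply mul_nonneg hbk_pos.le
          apply mul_nonneg _ hbl1_pos.le
          linarith
        have e0 : cc * ((((N:ℝ) + 1 - (k:ℝ) + 1) * bk1) * bl
              - bk * (((N:ℝ) + 1 - (l:ℝ) + 1) * bl1))
            = (cc * ((N:ℝ) + 1 - (k:ℝ) + 1)) * (bk1 * bl)
              - cc * (bk * (((N:ℝ) + 1 - (l:ℝ) + 1) * bl1)) := by ring
        rw [hcr] at e0
        have m1 : bk1 * bl ≤ ak1 * al := by
          have h1 : bk1 * bl ≤ ak1 * bl := mul_le_mul_of_nonneg_right hbk1_le hbl_pos.le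
          have h2 : ak1 * bl ≤ ak1 * al := mul_le_mul_of_nonneg_left hbl_le hak1_pos.le
          linarith
        have m2 : c2 * (bk1 * bl) ≤ c2 * (ak1 * al) :=
          mul_le_mul_of_nonneg_left m1 hc2pos.le
        have m3 : c2 * (ak1 * al) ≤ ak1 * al - ak * al1 := by
          rw [hc2, div_mul_eq_mul_div, div_le_iff₀ (mul_pos hkR hnlR')]
          have hdiff : (ak1 * al - ak * al1) * ((k:ℝ) * ((N:ℝ) + 1 - (l:ℝ)))
                - ((N:ℝ) + 1) * ((k:ℝ) - (l:ℝ)) * (ak1 * al)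
              = ak1 * al * ((l:ℝ) * ((N:ℝ) + 1 - (k:ℝ)))
                - ak * al1 * ((k:ℝ) * ((N:ℝ) + 1 - (l:ℝ))) := by ring
          linarith [hiv, hdiff]
        rw [hid]
        linarith [e0, hS2, m2, m3]
      -- divide by bl^2
      rw [hsumQ, hq0]
      rw [← mul_div_assoc]
      rw [div_le_div_iff₀ hD hD]
      exact mul_le_mul_of_nonneg_right hnum hD.le
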